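/- For fixed $t > 0$: if $|x| < t$ then $\lim_{\varepsilon \downarrow 0} \varepsilon\,\mathrm{arsinh}(e^{-t/\varepsilon}\sinh(x/\varepsilon)) = 0$; if $x > t$ then the limit equals $x - t$; and if $x < -t$ then the limit equals $x + t$. -/

import Mathlib

open Filter

lemma aux_abs_arsinh_le (y : ℝ) : |Real.arsinh y| ≤ |y| := by
  have key : ∀ z : ℝ, 0 ≤ z → Real.arsinh z ≤ z := by
    intro z hz
    have h1 : z ≤ Real.sinh z := by
      rcases eq_or_lt_of_le hz with h | h
      · simp [← h]
      · exact (Real.self_lt_sinh_iff.mpr h).le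
    calc Real.arsinh z ≤ Real.arsinh (Real.sinh z) := Real.arsinh_le_arsinh.mpr h1
      _ = z := Real.arsinh_sinh z
  rcases le_total 0 y with hy | hy
  · rw [abs_of_nonneg hy, abs_of_nonneg (Real.arsinh_nonneg_iff.mpr hy)]
    exact key y hy
  · rw [abs_of_nonpos hy, abs_of_nonpos (Real.arsinh_nonpos_iff.mpr hy)]
    have := key (-y) (by linarith)
    rw [Real.arsinh_neg] at this
    linarith

lemma aux_main (t x : ℝ) (ht : 0 < t) (hx : t < x) :
    Tendsto (fun ε : ℝ => ε * Real.arsinh (Real.exp (-t / ε) * Real.sinh (x / ε)))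
      (nhdsWithin 0 (Set.Ioi 0)) (nhds (x - t)) := by
  have hx0 : 0 < x := ht.trans hx
  have hlim : Tendsto (fun ε : ℝ => ε) (nhdsWithin 0 (Set.Ioi 0)) (nhds 0) :=
    tendsto_id.mono_left nhdsWithin_le_nhds
  have hlo : Tendsto (fun ε : ℝ => (x - t) - ε * Real.log 2)
      (nhdsWithin 0 (Set.Ioi 0)) (nhds (x - t)) := by
    have := (hlim.mul_const (Real.log 2)).const_sub (x - t)
    simpa using this
  have hhi : Tendsto (fun ε : ℝ => (x - t) + ε * Real.log 2)
      (nhdsWithin 0 (Set.Ioi 0)) (nhds (x - t)) := by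
    have := (hlim.mul_const (Real.log 2)).const_add (x - t)
    simpa using this
  refine tendsto_of_tendsto_of_tendsto_of_le_of_le' hlo hhi ?_ ?_
  all_goals
    filter_upwards [Ioo_mem_nhdsGT_of_mem (Set.left_mem_Ico.mpr hx0)] with ε hε
  all_goals
    obtain ⟨hε0, hεx⟩ := hε
    set a := x / ε with ha
    set u := Real.exp (-t / ε) * Real.sinh a with hu
    have ha1 : 1 < a := (one_lt_div hε0).mpr hεx
    have hea : (2 : ℝ) < Real.exp a := by
      calc (2 : ℝ) < Real.exp 1 := by
            have := Real.exp_one_gt_d9; linarith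
        _ < Real.exp a := Real.exp_lt_exp.mpr ha1
    have hsinh_lo : Real.exp a / 4 ≤ Real.sinh a := by
      rw [Real.sinh_eq]
      have h1 : Real.exp (-a) ≤ 1 := Real.exp_le_one_iff.mpr (by linarith)
      have h2 : (1 : ℝ) ≤ Real.exp a / 2 := by linarith
      linarith
    have hsinh_hi : Real.sinh a ≤ Real.exp a / 2 := by
      rw [Real.sinh_eq]
      have := (Real.exp_pos (-a)).le
      linarith
    have hB : Real.exp (-t / ε) * Real.exp a = Real.exp ((x - t) / ε) := by
      rw [← Real.exp_add, ha]; ring_nf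
    have hB0 : 0 ≤ (x - t) / ε := div_nonneg (by linarith) hε0.le
    have hB1 : (1 : ℝ) ≤ Real.exp ((x - t) / ε) := Real.one_le_exp hB0
    have hep : (0 : ℝ) < Real.exp (-t / ε) := Real.exp_pos _
    have hu_lo : Real.exp ((x - t) / ε) / 4 ≤ u := by
      rw [hu, ← hB]
      calc Real.exp (-t / ε) * Real.exp a / 4
          = Real.exp (-t / ε) * (Real.exp a / 4) := by ring
        _ ≤ Real.exp (-t / ε) * Real.sinh a := by
            exact mul_le_mul_of_nonneg_left hsinh_lo hep.le
    have hu_hi : u ≤ Real.exp ((x - t) / ε) / 2 := by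
      rw [hu, ← hB]
      calc Real.exp (-t / ε) * Real.sinh a
          ≤ Real.exp (-t / ε) * (Real.exp a / 2) :=
            mul_le_mul_of_nonneg_left hsinh_hi hep.le
        _ = Real.exp (-t / ε) * Real.exp a / 2 := by ring
    have hu0 : 0 < u := lt_of_lt_of_le (by positivity) hu_lo
    have hsq_lo : u ≤ Real.sqrt (1 + u ^ 2) := by
      calc u = Real.sqrt (u ^ 2) := (Real.sqrt_sq hu0.le).symm
        _ ≤ Real.sqrt (1 + u ^ 2) := Real.sqrt_le_sqrt (by linarith)
    have hsq_hi : Real.sqrt (1 + u ^ 2) ≤ 1 + u := by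
      calc Real.sqrt (1 + u ^ 2) ≤ Real.sqrt ((1 + u) ^ 2) :=
            Real.sqrt_le_sqrt (by nlinarith)
        _ = 1 + u := Real.sqrt_sq (by linarith)
    have harsinh_lo : (x - t) / ε - Real.log 2 ≤ Real.arsinh u := by
      rw [Real.arsinh]
      calc (x - t) / ε - Real.log 2
          = Real.log (Real.exp ((x - t) / ε)) - Real.log 2 := by
            rw [Real.log_exp]
        _ = Real.log (Real.exp ((x - t) / ε) / 2) := by
            rw [Real.log_div (by positivity) two_ne_zero]
        _ ≤ Real.log (2 * u) := by
            apply Real.log_le_log (by positivity)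
            linarith
        _ ≤ Real.log (u + Real.sqrt (1 + u ^ 2)) := by
            apply Real.log_le_log (by positivity)
            linarith
    have harsinh_hi : Real.arsinh u ≤ (x - t) / ε + Real.log 2 := by
      rw [Real.arsinh]
      calc Real.log (u + Real.sqrt (1 + u ^ 2))
          ≤ Real.log (1 + 2 * u) := by
            apply Real.log_le_log (by positivity)
            linarith
        _ ≤ Real.log (2 * Real.exp ((x - t) / ε)) := by
            apply Real.log_le_log (by positivity)
            linarith
        _ = Real.log 2 + (x - t) / ε := by
            rw [Real.log_mul two_ne_zero (by positivity), Real.log_exp]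
        _ = (x - t) / ε + Real.log 2 := by ring
  · -- lower bound
    have := mul_le_mul_of_nonneg_left harsinh_lo hε0.le
    have hdiv : ε * ((x - t) / ε) = x - t := by field_simp
    calc x - t - ε * Real.log 2 = ε * ((x - t) / ε - Real.log 2) := by
          rw [mul_sub, hdiv]
      _ ≤ ε * Real.arsinh u := this
  · -- upper bound
    have := mul_le_mul_of_nonneg_left harsinh_hi hε0.le
    have hdiv : ε * ((x - t) / ε) = x - t := by field_simp
    calc ε * Real.arsinh u ≤ ε * ((x - t) / ε + Real.log 2) := this
      _ = x - t + ε * Real.log 2 := by rw [mul_add, hdiv]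

theorem stmt_8 (t x : ℝ) (ht : 0 < t) :
    (|x| < t → Tendsto
        (fun ε : ℝ => ε * Real.arsinh (Real.exp (-t / ε) * Real.sinh (x / ε)))
        (nhdsWithin 0 (Set.Ioi 0)) (nhds 0)) ∧
    (t < x → Tendsto
        (fun ε : ℝ => ε * Real.arsinh (Real.exp (-t / ε) * Real.sinh (x / ε)))
        (nhdsWithin 0 (Set.Ioi 0)) (nhds (x - t))) ∧
    (x < -t → Tendsto
        (fun ε : ℝ => ε * Real.arsinh (Real.exp (-t / ε) * Real.sinh (x / ε)))
        (nhdsWithin 0 (Set.Ioi 0)) (nhds (x + t))) := by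
  refine ⟨?_, fun hx => aux_main t x ht hx, ?_⟩
  · intro hx
    have hlim : Tendsto (fun ε : ℝ => ε / 2) (nhdsWithin 0 (Set.Ioi 0)) (nhds 0) := by
      have := (tendsto_id.mono_left (nhdsWithin_le_nhds :
        nhdsWithin (0:ℝ) (Set.Ioi 0) ≤ nhds 0)).div_const (2:ℝ)
      simpa using this
    apply squeeze_zero_norm' _ hlim
    filter_upwards [self_mem_nhdsWithin] with ε (hε : 0 < ε)
    have habs : |Real.exp (-t / ε) * Real.sinh (x / ε)| ≤ 1 / 2 := by
      rw [abs_mul, abs_of_pos (Real.exp_pos _), Real.abs_sinh]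
      have h1 : Real.sinh |x / ε| ≤ Real.exp |x / ε| / 2 := by
        rw [Real.sinh_eq]
        have := (Real.exp_pos (-|x / ε|)).le
        linarith
      have h2 : Real.exp (-t / ε) * (Real.exp |x / ε| / 2)
          = Real.exp ((|x| - t) / ε) / 2 := by
        rw [abs_div, abs_of_pos hε, mul_div_assoc', ← Real.exp_add]
        ring_nf
      have h3 : Real.exp ((|x| - t) / ε) ≤ 1 :=
        Real.exp_le_one_iff.mpr (div_nonpos_of_nonpos_of_nonneg (by linarith) hε.le)
      calc Real.exp (-t / ε) * Real.sinh |x / ε|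
          ≤ Real.exp (-t / ε) * (Real.exp |x / ε| / 2) :=
            mul_le_mul_of_nonneg_left h1 (Real.exp_pos _).le
        _ = Real.exp ((|x| - t) / ε) / 2 := h2
        _ ≤ 1 / 2 := by linarith
    calc ‖ε * Real.arsinh (Real.exp (-t / ε) * Real.sinh (x / ε))‖
        = ε * |Real.arsinh (Real.exp (-t / ε) * Real.sinh (x / ε))| := by
          rw [Real.norm_eq_abs, abs_mul, abs_of_pos hε]
      _ ≤ ε * (1 / 2) :=
          mul_le_mul_of_nonneg_left
            ((aux_abs_arsinh_le _).trans habs) hε.le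
      _ = ε / 2 := by ring
  · intro hx
    have hx' : t < -x := by linarith
    have h := aux_main t (-x) ht hx'
    have heq : (fun ε : ℝ => ε * Real.arsinh (Real.exp (-t / ε) * Real.sinh (x / ε)))
        = fun ε : ℝ => -(ε * Real.arsinh (Real.exp (-t / ε) * Real.sinh (-x / ε))) := by
      funext ε
      have : Real.sinh (-x / ε) = -Real.sinh (x / ε) := by
        rw [neg_div, Real.sinh_neg]
      rw [this, mul_neg, Real.arsinh_neg]
      ring
    rw [heq]
    have h2 := h.neg
    have : -(-x - t) = x + t := by ring
    rw [this] at h2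
    exact h2
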